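/- For an n-dimensional finite signed vector measure α on (S, F), the Lorenz hull of α equals the set of all vector integrals { ∫_S f dα : f : S → [0,1] measurable }, where ∫_S f dα := (∫ f dα₁, …, ∫ f dαₙ). -/

import Mathlib

open MeasureTheory

/-- The Lorenz hull of an `n`-dimensional finite signed vector measure:
the convex hull of its range in `ℝⁿ`. -/
def lorenzHull {n : ℕ} {S : Type*} [MeasurableSpace S]
    (α : Fin n → MeasureTheory.SignedMeasure S) : Set (Fin n → ℝ) :=
  convexHull ℝ {x | ∃ A : Set S, MeasurableSet A ∧ x = fun i => α i A}

/-- Integral of a real function against a finite signed measure, via the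
Jordan decomposition. -/
noncomputable def sintegral {S : Type*} [MeasurableSpace S]
    (α : MeasureTheory.SignedMeasure S) (f : S → ℝ) : ℝ :=
  (∫ s, f s ∂α.toJordanDecomposition.posPart)
    - ∫ s, f s ∂α.toJordanDecomposition.negPart

open Set

section Aux

variable {E : Type*} [NormedAddCommGroup E] [NormedSpace ℝ E]

theorem aux_int_cl {C : Set E}
    (hC : Convex ℝ C) (hne : (interior C).Nonempty) : interior (closure C) ⊆ C := by
  rintro x hx
  obtain ⟨y, hy⟩ := hne
  rcases Metric.isOpen_iff.mp isOpen_interior x hx with ⟨ε, hε, hball⟩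
  by_cases hxy : x = y
  · exact hxy ▸ interior_subset hy
  have hnorm : (0:ℝ) < ‖x - y‖ := by
    simpa [sub_eq_zero] using (norm_pos_iff.mpr (sub_ne_zero.mpr hxy))
  set t : ℝ := ε / (2 * ‖x - y‖) with ht
  have htpos : 0 < t := by positivity
  have hz : x + t • (x - y) ∈ closure C := by
    apply interior_subset
    apply hball
    simp only [Metric.mem_ball, dist_eq_norm]
    have h2 : x + t • (x - y) - x = t • (x - y) := by abel
    rw [h2, norm_smul, Real.norm_eq_abs, abs_of_pos htpos, ht]
    rw [div_mul_eq_mul_div, mul_comm]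
    have : ‖x - y‖ * ε / (2 * ‖x - y‖) = ε / 2 := by
      field_simp
    rw [this]; linarith
  have hcomb := hC.combo_closure_interior_mem_interior hz (hy)
    (a := 1/(1+t)) (b := t/(1+t)) (by positivity) (by positivity) (by field_simp)
  have heq : (1/(1+t)) • (x + t • (x - y)) + (t/(1+t)) • y = x := by
    have h1t : (1:ℝ) + t ≠ 0 := by positivity
    have : (1/(1+t)) • (x + t • (x - y)) + (t/(1+t)) • y
        = ((1/(1+t)) * (1+t)) • x + ((1/(1+t)) * t - t/(1+t)) • y := by module
    rw [this, one_div_mul_cancel h1t]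
    have : (1/(1+t)) * t - t/(1+t) = 0 := by ring
    rw [this]; simp
  rw [heq] at hcomb
  exact interior_subset hcomb

theorem aux_subset_cl_int {C : Set E}
    (hC : Convex ℝ C) (hne : (interior C).Nonempty) : C ⊆ closure (interior C) := by
  obtain ⟨y, hy⟩ := hne
  intro p hp
  rw [mem_closure_iff_seq_limit]
  refine ⟨fun k => p + ((1:ℝ)/(k+1)) • (y - p), fun k => ?_, ?_⟩
  · refine hC.add_smul_sub_mem_interior hp hy ⟨by positivity, ?_⟩
    rw [div_le_one (by positivity)]
    have : (0:ℝ) ≤ k := Nat.cast_nonneg k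
    linarith
  · have h1 : Filter.Tendsto (fun k : ℕ => (1:ℝ)/(k+1)) Filter.atTop (nhds 0) :=
      tendsto_one_div_add_atTop_nhds_zero_nat
    have h2 : Filter.Tendsto (fun k : ℕ => ((1:ℝ)/(k+1)) • (y - p)) Filter.atTop
        (nhds ((0:ℝ) • (y - p))) := h1.smul_const _
    rw [zero_smul] at h2
    have h3 := h2.const_add p
    simpa using h3

theorem span_top_to_affine {n : ℕ} (s : Set (Fin n → ℝ)) (h0 : (0:Fin n → ℝ) ∈ s)
    (hsp : Submodule.span ℝ s = ⊤) : affineSpan ℝ s = ⊤ := by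
  have h := affineSpan_insert_zero (k := ℝ) s
  rw [Set.insert_eq_self.mpr h0, hsp] at h
  exact (AffineSubspace.coe_eq_univ_iff _).mp (by rw [h]; simp)

theorem aux_rep {m : ℕ} (φ : (Fin m → ℝ) →ₗ[ℝ] ℝ) (y : Fin m → ℝ) :
    φ y = ∑ i, y i * φ (Pi.single i 1) := by
  conv_lhs => rw [← Finset.univ_sum_single y]
  rw [map_sum]
  refine Finset.sum_congr rfl fun i _ => ?_
  have h1 : Pi.single i (y i) = (y i) • (Pi.single i 1 : Fin m → ℝ) := by
    rw [← Pi.single_smul, smul_eq_mul, mul_one]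
  rw [h1, _root_.map_smul, smul_eq_mul]

end Aux

section DWW

variable {S : Type*} [MeasurableSpace S]

/-- The set of points `(∫_A g i dμ)_i` for measurable `A`. -/
def rangePts {n : ℕ} (μ : Measure S) (g : Fin n → S → ℝ) : Set (Fin n → ℝ) :=
  {x | ∃ A : Set S, MeasurableSet A ∧ x = fun i => ∫ s in A, g i s ∂μ}

theorem dww_reduction (μ : Measure S) [IsFiniteMeasure μ] {n : ℕ}
    (ih : ∀ (g : Fin n → S → ℝ), (∀ i, Measurable (g i)) → (∀ i, Integrable (g i) μ) →
      ∀ f : S → ℝ, Measurable f → (∀ s, f s ∈ Set.Icc (0:ℝ) 1) →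
      (fun i => ∫ s, f s * g i s ∂μ) ∈ convexHull ℝ (rangePts μ g))
    (g : Fin (n+1) → S → ℝ) (hgm : ∀ i, Measurable (g i)) (hgi : ∀ i, Integrable (g i) μ)
    (f : S → ℝ) (hfm : Measurable f) (hf01 : ∀ s, f s ∈ Set.Icc (0:ℝ) 1)
    (u : Fin (n+1) → ℝ) (hu : u ≠ 0)
    (key : ∫ s, f s * (∑ i, u i * g i s) ∂μ
         = ∫ s, {s' | 0 < ∑ i, u i * g i s'}.indicator (fun s' => ∑ i, u i * g i s') s ∂μ) :
    (fun i => ∫ s, f s * g i s ∂μ) ∈ convexHull ℝ (rangePts μ g) := by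
  classical
  set h : S → ℝ := fun s => ∑ i, u i * g i s with hh
  have hhm : Measurable h := Finset.measurable_sum _ fun i _ => (hgm i).const_mul (u i)
  have hhi : Integrable h μ := integrable_finset_sum _ fun i _ => ((hgi i).const_mul (u i))
  set P : Set S := {s | 0 < h s} with hP
  set Z : Set S := {s | h s = 0} with hZ
  have hPm : MeasurableSet P := measurableSet_lt measurable_const hhm
  have hZm : MeasurableSet Z := hhm (measurableSet_singleton 0)
  have hfb : ∀ s, ‖f s‖ ≤ 1 := fun s => by
    rw [Real.norm_eq_abs, abs_le]; exact ⟨by linarith [(hf01 s).1], (hf01 s).2⟩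
  have hfhi : Integrable (fun s => f s * h s) μ :=
    hhi.bdd_mul hfm.aestronglyMeasurable (Filter.Eventually.of_forall hfb)
  -- the perturbation function ψ ≥ 0 with ∫ψ = 0
  set ψ : S → ℝ := fun s => (P.indicator (fun _ => (1:ℝ)) s - f s) * h s with hψ
  have hψnn : (0 : S → ℝ) ≤ ψ := by
    intro s
    by_cases hs : 0 < h s
    · have : s ∈ P := hs
      simp only [ψ, Set.indicator_of_mem this, Pi.zero_apply]
      nlinarith [(hf01 s).2]
    · have : s ∉ P := hs
      simp only [ψ, Set.indicator_of_notMem this, Pi.zero_apply]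
      nlinarith [(hf01 s).1, not_lt.mp hs]
  have hindm : Measurable (P.indicator (fun _ : S => (1:ℝ))) :=
    measurable_const.indicator hPm
  have hψi : Integrable ψ μ := by
    refine hhi.bdd_mul (c := 2) ((hindm.sub hfm)).aestronglyMeasurable (Filter.Eventually.of_forall fun s => ?_)
    have h1 : ‖P.indicator (fun _ : S => (1:ℝ)) s‖ ≤ 1 := by
      by_cases hs : s ∈ P <;> simp [Set.indicator_of_mem, Set.indicator_of_notMem, hs]
    calc ‖P.indicator (fun _ : S => (1:ℝ)) s - f s‖
        ≤ ‖P.indicator (fun _ : S => (1:ℝ)) s‖ + ‖f s‖ := norm_sub_le _ _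
      _ ≤ 2 := by linarith [hfb s]
  have hindh : ∀ s, P.indicator (fun _ : S => (1:ℝ)) s * h s = P.indicator h s := by
    intro s; by_cases hs : s ∈ P <;>
      simp [Set.indicator_of_mem, Set.indicator_of_notMem, hs]
  have hindhi : Integrable (P.indicator h) μ := hhi.indicator hPm
  have hψ0 : ψ =ᵐ[μ] 0 := by
    refine (integral_eq_zero_iff_of_nonneg hψnn hψi).mp ?_
    have : ∫ s, ψ s ∂μ = (∫ s, P.indicator h s ∂μ) - ∫ s, f s * h s ∂μ := by
      rw [← integral_sub hindhi hfhi]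
      refine integral_congr_ae (Filter.Eventually.of_forall fun s => ?_)
      simp only [ψ, sub_mul, hindh s]
    rw [this, key]
    ring
  -- replace f by its "purification" F
  set F : S → ℝ := fun s => if 0 < h s then 1 else if h s < 0 then 0 else f s with hF
  have hFf : F =ᵐ[μ] f := by
    filter_upwards [hψ0] with s hs
    simp only [Pi.zero_apply, ψ] at hs
    by_cases h1 : 0 < h s
    · have : s ∈ P := h1
      rw [Set.indicator_of_mem this] at hs
      rcases mul_eq_zero.mp hs with h2 | h2
      · simp only [F, if_pos h1]; linarith
      · exact absurd h2 (ne_of_gt h1)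
    · by_cases h2 : h s < 0
      · have : s ∉ P := h1
        rw [Set.indicator_of_notMem this] at hs
        rcases mul_eq_zero.mp hs with h3 | h3
        · simp only [F, if_neg h1, if_pos h2]; linarith
        · exact absurd h3 (ne_of_lt h2)
      · simp only [F, if_neg h1, if_neg h2]
  have hxi : ∀ i, ∫ s, f s * g i s ∂μ = ∫ s, F s * g i s ∂μ := by
    intro i
    refine integral_congr_ae ?_
    filter_upwards [hFf] with s hs
    rw [hs]
  -- decomposition F*g = 1_P g + f * g'
  set g' : Fin (n+1) → S → ℝ := fun i => Z.indicator (g i) with hg'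
  have hg'm : ∀ i, Measurable (g' i) := fun i => (hgm i).indicator hZm
  have hg'i : ∀ i, Integrable (g' i) μ := fun i => (hgi i).indicator hZm
  have hdecomp : ∀ i s, F s * g i s = P.indicator (g i) s + f s * g' i s := by
    intro i s
    by_cases h1 : 0 < h s
    · have hsP : s ∈ P := h1
      have hsZ : s ∉ Z := fun hz => absurd (hz : h s = 0) (ne_of_gt h1)
      simp [F, g', if_pos h1, Set.indicator_of_mem hsP, Set.indicator_of_notMem hsZ]
    · by_cases h2 : h s < 0
      · have hsP : s ∉ P := h1
        have hsZ : s ∉ Z := fun hz => absurd (hz : h s = 0) (ne_of_lt h2)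
        simp [F, g', if_neg h1, if_pos h2, Set.indicator_of_notMem hsP,
          Set.indicator_of_notMem hsZ]
      · have h0 : h s = 0 := le_antisymm (not_lt.mp h1) (not_lt.mp h2)
        have hsP : s ∉ P := h1
        have hsZ : s ∈ Z := h0
        simp [F, g', if_neg h1, if_neg h2, Set.indicator_of_notMem hsP,
          Set.indicator_of_mem hsZ]
  have hfg'i : ∀ i, Integrable (fun s => f s * g' i s) μ := fun i =>
    (hg'i i).bdd_mul hfm.aestronglyMeasurable (Filter.Eventually.of_forall hfb)
  have hxi2 : ∀ i, ∫ s, f s * g i s ∂μ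
      = (∫ s in P, g i s ∂μ) + ∫ s, f s * g' i s ∂μ := by
    intro i
    rw [hxi i, ← integral_indicator hPm, ← integral_add ((hgi i).indicator hPm) (hfg'i i)]
    refine integral_congr_ae (Filter.Eventually.of_forall fun s => hdecomp i s)
  -- the linear relation on g'
  have hrel : ∀ s, ∑ i, u i * g' i s = 0 := by
    intro s
    by_cases hs : s ∈ Z
    · have : ∀ i, g' i s = g i s := fun i => Set.indicator_of_mem hs _
      simp only [this]
      exact hs
    · have : ∀ i, g' i s = 0 := fun i => Set.indicator_of_notMem hs _
      simp [this]
  -- apply induction hypothesis to the reduced family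
  obtain ⟨j, hj⟩ : ∃ j, u j ≠ 0 := Function.ne_iff.mp hu
  set G : Fin n → S → ℝ := fun i' => g' (j.succAbove i') with hG
  have hmem := ih G (fun i' => hg'm _) (fun i' => hg'i _) f hfm hf01
  rw [convexHull_eq] at hmem
  obtain ⟨ι, t, w, z, hw0, hw1, hz, hcm⟩ := hmem
  have hB : ∀ k : ι, ∃ A : Set S, MeasurableSet A ∧
      (k ∈ t → z k = fun i' => ∫ s in A, G i' s ∂μ) := by
    intro k
    by_cases hk : k ∈ t
    · obtain ⟨A, hA, hzA⟩ := hz k hk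
      exact ⟨A, hA, fun _ => hzA⟩
    · exact ⟨∅, MeasurableSet.empty, fun hk' => absurd hk' hk⟩
  choose B hBm hBz using hB
  rw [Finset.centerMass_eq_of_sum_1 _ _ hw1] at hcm
  -- the L/R bookkeeping
  set L : Fin (n+1) → ℝ := fun i => ∑ k ∈ t, w k * ∫ s in B k, g' i s ∂μ with hL
  set R : Fin (n+1) → ℝ := fun i => ∫ s, f s * g' i s ∂μ with hR
  have hLR : ∀ i', L (j.succAbove i') = R (j.succAbove i') := by
    intro i'
    have := congrFun hcm i'
    simp only [Finset.sum_apply, Pi.smul_apply, smul_eq_mul] at this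
    calc L (j.succAbove i') = ∑ k ∈ t, w k * z k i' := by
          refine Finset.sum_congr rfl fun k hk => ?_
          rw [hBz k hk]
      _ = ∫ s, f s * G i' s ∂μ := this
      _ = R (j.succAbove i') := rfl
  have hintBg' : ∀ i (k : ι), Integrable (g' i) (μ.restrict (B k)) :=
    fun i k => (hg'i i).restrict
  have hLsum : ∑ i, u i * L i = 0 := by
    have swap : ∑ i, u i * L i = ∑ k ∈ t, w k * ∑ i, u i * ∫ s in B k, g' i s ∂μ := by
      simp only [hL, Finset.mul_sum]
      rw [Finset.sum_comm]
      refine Finset.sum_congr rfl fun k _ => Finset.sum_congr rfl fun i _ => by ring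
    rw [swap]
    refine Finset.sum_eq_zero fun k _ => ?_
    have : ∑ i, u i * ∫ s in B k, g' i s ∂μ = ∫ s in B k, ∑ i, u i * g' i s ∂μ := by
      rw [integral_finset_sum _ fun i _ => (hintBg' i k).const_mul (u i)]
      refine Finset.sum_congr rfl fun i _ => ?_
      rw [integral_const_mul]
    rw [this]
    simp [hrel]
  have hRsum : ∑ i, u i * R i = 0 := by
    have : ∑ i, u i * R i = ∫ s, ∑ i, u i * (f s * g' i s) ∂μ := by
      rw [integral_finset_sum _ fun i _ => (hfg'i i).const_mul (u i)]
      refine Finset.sum_congr rfl fun i _ => ?_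
      rw [integral_const_mul]
    rw [this]
    have : ∀ s, ∑ i, u i * (f s * g' i s) = f s * ∑ i, u i * g' i s := by
      intro s; rw [Finset.mul_sum]; exact Finset.sum_congr rfl fun i _ => by ring
    simp only [this, hrel, mul_zero, integral_zero]
  have hLj : L j = R j := by
    have h1 := Fin.sum_univ_succAbove (fun i => u i * L i) j
    have h2 := Fin.sum_univ_succAbove (fun i => u i * R i) j
    rw [hLsum] at h1; rw [hRsum] at h2
    have : u j * L j = u j * R j := by
      have e1 : ∑ i', u (j.succAbove i') * L (j.succAbove i')
          = ∑ i', u (j.succAbove i') * R (j.succAbove i') :=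
        Finset.sum_congr rfl fun i' _ => by rw [hLR i']
      have := h1.symm.trans h2
      rw [e1] at this
      linarith
    exact mul_left_cancel₀ hj this
  have hLRall : ∀ i, L i = R i := by
    intro i
    by_cases hij : i = j
    · rw [hij]; exact hLj
    · obtain ⟨i', rfl⟩ := Fin.exists_succAbove_eq hij
      exact hLR i'
  -- assemble the final convex combination
  set A : ι → Set S := fun k => (B k ∩ Z) ∪ P with hA
  have hAm : ∀ k, MeasurableSet (A k) := fun k => ((hBm k).inter hZm).union hPm
  have hdisj : ∀ k, Disjoint (B k ∩ Z) P := by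
    intro k
    rw [Set.disjoint_left]
    rintro s ⟨-, hsZ⟩ hsP
    exact absurd (hsZ : h s = 0) (ne_of_gt (hsP : 0 < h s))
  have hpk : ∀ k i, ∫ s in A k, g i s ∂μ
      = (∫ s in B k, g' i s ∂μ) + ∫ s in P, g i s ∂μ := by
    intro k i
    rw [hA, setIntegral_union (hdisj k) hPm ((hgi i).integrableOn) ((hgi i).integrableOn)]
    congr 1
    rw [hg']
    rw [setIntegral_indicator hZm]
  have hfinal : (fun i => ∫ s, f s * g i s ∂μ)
      = t.centerMass w (fun k i => ∫ s in A k, g i s ∂μ) := by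
    rw [Finset.centerMass_eq_of_sum_1 _ _ hw1]
    funext i
    simp only [Finset.sum_apply, Pi.smul_apply, smul_eq_mul]
    rw [hxi2 i]
    have : ∀ k ∈ t, w k * ∫ s in A k, g i s ∂μ
        = w k * ∫ s in B k, g' i s ∂μ + w k * ∫ s in P, g i s ∂μ := by
      intro k _
      rw [hpk k i]; ring
    rw [Finset.sum_congr rfl this, Finset.sum_add_distrib, ← Finset.sum_mul, hw1, one_mul]
    have : ∑ k ∈ t, w k * ∫ s in B k, g' i s ∂μ = L i := rfl
    rw [this, hLRall i, hR]
    ring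
  rw [hfinal]
  exact Finset.centerMass_mem_convexHull _ hw0 (by rw [hw1]; norm_num)
    (fun k _ => ⟨A k, hAm k, rfl⟩)

end DWW

section DWW2

variable {S : Type*} [MeasurableSpace S]

theorem aux_sum_mul_integral {m : ℕ} (ν : Measure S) (g : Fin m → S → ℝ)
    (hgi : ∀ i, Integrable (g i) ν) (u : Fin m → ℝ) :
    ∑ i, u i * ∫ s, g i s ∂ν = ∫ s, ∑ i, u i * g i s ∂ν := by
  rw [integral_finset_sum _ fun i _ => (hgi i).const_mul (u i)]
  exact Finset.sum_congr rfl fun i _ => (integral_const_mul _ _).symm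

end DWW2

section DWW3
variable {S : Type*} [MeasurableSpace S]

theorem dww_main (μ : Measure S) [IsFiniteMeasure μ] :
    ∀ (n : ℕ) (g : Fin n → S → ℝ), (∀ i, Measurable (g i)) → (∀ i, Integrable (g i) μ) →
      ∀ f : S → ℝ, Measurable f → (∀ s, f s ∈ Set.Icc (0:ℝ) 1) →
      (fun i => ∫ s, f s * g i s ∂μ) ∈ convexHull ℝ (rangePts μ g) := by
  intro n
  induction n with
  | zero =>
    intro g hgm hgi f hfm hf01
    apply subset_convexHull
    exact ⟨∅, MeasurableSet.empty, funext fun i => i.elim0⟩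
  | succ n ih =>
    intro g hgm hgi f hfm hf01
    classical
    have hfb : ∀ s, ‖f s‖ ≤ 1 := fun s => by
      rw [Real.norm_eq_abs, abs_le]; exact ⟨by linarith [(hf01 s).1], (hf01 s).2⟩
    have h0mem : (0 : Fin (n+1) → ℝ) ∈ rangePts μ g := by
      refine ⟨∅, MeasurableSet.empty, funext fun i => ?_⟩
      simp
    set C := convexHull ℝ (rangePts μ g) with hCdef
    have hCc : Convex ℝ C := convex_convexHull ℝ _
    set xpt : Fin (n+1) → ℝ := fun i => ∫ s, f s * g i s ∂μ with hxpt
    -- generic facts for any direction u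
    have hhm : ∀ u : Fin (n+1) → ℝ, Measurable (fun s => ∑ i, u i * g i s) := fun u =>
      Finset.measurable_sum _ fun i _ => (hgm i).const_mul (u i)
    have hhi : ∀ u : Fin (n+1) → ℝ, Integrable (fun s => ∑ i, u i * g i s) μ := fun u =>
      integrable_finset_sum _ fun i _ => ((hgi i).const_mul (u i))
    have hfhi : ∀ u : Fin (n+1) → ℝ, Integrable (fun s => f s * ∑ i, u i * g i s) μ := fun u =>
      (hhi u).bdd_mul hfm.aestronglyMeasurable (Filter.Eventually.of_forall hfb)
    have hvalA : ∀ (u : Fin (n+1) → ℝ) (A : Set S),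
        ∑ i, u i * (∫ s in A, g i s ∂μ) = ∫ s in A, ∑ i, u i * g i s ∂μ := fun u A =>
      aux_sum_mul_integral (μ.restrict A) g (fun i => (hgi i).restrict) u
    have hvalx : ∀ u : Fin (n+1) → ℝ,
        ∑ i, u i * xpt i = ∫ s, f s * ∑ i, u i * g i s ∂μ := by
      intro u
      rw [hxpt]
      have := aux_sum_mul_integral μ (fun i s => f s * g i s)
        (fun i => (hgi i).bdd_mul hfm.aestronglyMeasurable (Filter.Eventually.of_forall hfb)) u
      rw [this]
      refine integral_congr_ae (Filter.Eventually.of_forall fun s => ?_)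
      simp only [Finset.mul_sum]
      exact Finset.sum_congr rfl fun i _ => by ring
    -- pointwise bounds
    have hub : ∀ u : Fin (n+1) → ℝ, ∫ s, f s * ∑ i, u i * g i s ∂μ
        ≤ ∫ s, {s' | 0 < ∑ i, u i * g i s'}.indicator (fun s' => ∑ i, u i * g i s') s ∂μ := by
      intro u
      refine integral_mono (hfhi u) ((hhi u).indicator
        (measurableSet_lt measurable_const (hhm u))) fun s => ?_
      by_cases hs : 0 < ∑ i, u i * g i s
      · simp only [Set.indicator_apply, Set.mem_setOf_eq, if_pos hs]
        nlinarith [(hf01 s).2, (hf01 s).1]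
      · simp only [Set.indicator_apply, Set.mem_setOf_eq, if_neg hs]
        nlinarith [(hf01 s).1, not_lt.mp hs]
    have hlb : ∀ u : Fin (n+1) → ℝ,
        ∫ s, {s' | ∑ i, u i * g i s' < 0}.indicator (fun s' => ∑ i, u i * g i s') s ∂μ
        ≤ ∫ s, f s * ∑ i, u i * g i s ∂μ := by
      intro u
      refine integral_mono ((hhi u).indicator
        (measurableSet_lt (hhm u) measurable_const)) (hfhi u) fun s => ?_
      by_cases hs : (∑ i, u i * g i s) < 0
      · simp only [Set.indicator_apply, Set.mem_setOf_eq, if_pos hs]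
        nlinarith [(hf01 s).2, (hf01 s).1]
      · simp only [Set.indicator_apply, Set.mem_setOf_eq, if_neg hs]
        nlinarith [(hf01 s).1, not_lt.mp hs]
    have hindP : ∀ u : Fin (n+1) → ℝ,
        ∫ s, {s' | 0 < ∑ i, u i * g i s'}.indicator (fun s' => ∑ i, u i * g i s') s ∂μ
        = ∫ s in {s' | 0 < ∑ i, u i * g i s'}, ∑ i, u i * g i s ∂μ :=
      fun u => integral_indicator (measurableSet_lt measurable_const (hhm u))
    have hindN : ∀ u : Fin (n+1) → ℝ,
        ∫ s, {s' | ∑ i, u i * g i s' < 0}.indicator (fun s' => ∑ i, u i * g i s') s ∂μ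
        = ∫ s in {s' | ∑ i, u i * g i s' < 0}, ∑ i, u i * g i s ∂μ :=
      fun u => integral_indicator (measurableSet_lt (hhm u) measurable_const)
    by_cases hsp : Submodule.span ℝ (rangePts μ g) = ⊤
    · -- full-dimensional case
      have haff := span_top_to_affine _ h0mem hsp
      have hint : (interior C).Nonempty := by
        rw [hCc.interior_nonempty_iff_affineSpan_eq_top, hCdef, affineSpan_convexHull]
        exact haff
      by_cases hx : xpt ∈ interior (closure C)
      · exact aux_int_cl hCc hint hx
      · have hx' : xpt ∉ interior C := fun hm => hx (interior_mono subset_closure hm)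
        obtain ⟨φ, hφ⟩ := geometric_hahn_banach_open_point hCc.interior isOpen_interior hx'
        set u : Fin (n+1) → ℝ := fun i => φ (Pi.single i 1) with hudef
        have hrep : ∀ y, φ y = ∑ i, y i * u i := fun y => aux_rep (φ : (Fin (n+1) → ℝ) →ₗ[ℝ] ℝ) y
        have hune : u ≠ 0 := by
          intro h0
          obtain ⟨a, ha⟩ := hint
          have h1 := hφ a ha
          have h2 : ∀ y : Fin (n+1) → ℝ, φ y = 0 := fun y => by
            rw [hrep y, h0]; simp
          rw [h2 a, h2 xpt] at h1
          exact lt_irrefl 0 h1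
        have hle : ∀ p ∈ C, φ p ≤ φ xpt := by
          intro p hp
          have hclosed : IsClosed {y : Fin (n+1) → ℝ | φ y ≤ φ xpt} :=
            isClosed_le φ.continuous continuous_const
          have hsub : closure (interior C) ⊆ {y | φ y ≤ φ xpt} :=
            hclosed.closure_subset_iff.mpr (fun a ha => (hφ a ha).le)
          exact hsub (aux_subset_cl_int hCc hint hp)
        have hPmem : (fun i => ∫ s in {s' | 0 < ∑ i, u i * g i s'}, g i s ∂μ) ∈ C :=
          subset_convexHull ℝ _ ⟨_, measurableSet_lt measurable_const (hhm u), rfl⟩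
        have e1 : φ (fun i => ∫ s in {s' | 0 < ∑ i, u i * g i s'}, g i s ∂μ)
            = ∫ s in {s' | 0 < ∑ i, u i * g i s'}, ∑ i, u i * g i s ∂μ := by
          rw [hrep]
          exact (Finset.sum_congr rfl fun i _ => by ring).trans (hvalA u _)
        have e2 : φ xpt = ∫ s, f s * ∑ i, u i * g i s ∂μ := by
          rw [hrep]
          exact (Finset.sum_congr rfl fun i _ => by ring).trans (hvalx u)
        have key : ∫ s, f s * (∑ i, u i * g i s) ∂μ
            = ∫ s, {s' | 0 < ∑ i, u i * g i s'}.indicator (fun s' => ∑ i, u i * g i s') s ∂μ := by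
          refine le_antisymm (hub u) ?_
          rw [hindP u]
          calc ∫ s in {s' | 0 < ∑ i, u i * g i s'}, ∑ i, u i * g i s ∂μ
              = φ (fun i => ∫ s in {s' | 0 < ∑ i, u i * g i s'}, g i s ∂μ) := (e1).symm
            _ ≤ φ xpt := hle _ hPmem
            _ = ∫ s, f s * ∑ i, u i * g i s ∂μ := e2
        exact dww_reduction μ ih g hgm hgi f hfm hf01 u hune key
    · -- degenerate case
      obtain ⟨φ, hφne, hφbot⟩ :=
        Submodule.exists_dual_map_eq_bot_of_lt_top (p := Submodule.span ℝ (rangePts μ g))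
          (lt_top_iff_ne_top.mpr hsp) inferInstance
      have hφ0 : ∀ p ∈ rangePts μ g, φ p = 0 := by
        intro p hp
        have h1 : φ p ∈ (Submodule.span ℝ (rangePts μ g)).map φ :=
          Submodule.mem_map_of_mem (Submodule.subset_span hp)
        rw [hφbot] at h1
        simpa using h1
      set u : Fin (n+1) → ℝ := fun i => φ (Pi.single i 1) with hudef
      have hrep : ∀ y, φ y = ∑ i, y i * u i := fun y => aux_rep φ y
      have hune : u ≠ 0 := by
        intro h0
        apply hφne
        apply LinearMap.ext
        intro y
        rw [hrep y, h0]; simp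
      have eP : ∫ s in {s' | 0 < ∑ i, u i * g i s'}, ∑ i, u i * g i s ∂μ = 0 := by
        have hq : φ (fun i => ∫ s in {s' | 0 < ∑ i, u i * g i s'}, g i s ∂μ) = 0 :=
          hφ0 _ ⟨_, measurableSet_lt measurable_const (hhm u), rfl⟩
        rw [hrep] at hq
        exact ((hvalA u _).symm.trans (Finset.sum_congr rfl fun i _ => by ring)).trans hq
      have eN : ∫ s in {s' | ∑ i, u i * g i s' < 0}, ∑ i, u i * g i s ∂μ = 0 := by
        have hq : φ (fun i => ∫ s in {s' | ∑ i, u i * g i s' < 0}, g i s ∂μ) = 0 :=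
          hφ0 _ ⟨_, measurableSet_lt (hhm u) measurable_const, rfl⟩
        rw [hrep] at hq
        exact ((hvalA u _).symm.trans (Finset.sum_congr rfl fun i _ => by ring)).trans hq
      have key : ∫ s, f s * (∑ i, u i * g i s) ∂μ
          = ∫ s, {s' | 0 < ∑ i, u i * g i s'}.indicator (fun s' => ∑ i, u i * g i s') s ∂μ := by
        have h1 := hub u
        have h2 := hlb u
        rw [hindP u, eP] at h1
        rw [hindN u, eN] at h2
        rw [hindP u, eP]
        linarith
      exact dww_reduction μ ih g hgm hgi f hfm hf01 u hune key

end DWW3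

section Bridge
variable {S : Type*} [MeasurableSpace S]

/-- density of a signed measure with respect to a dominating measure -/
noncomputable def sdens (β : SignedMeasure S) (μ : Measure S) : S → ℝ := fun s =>
  (β.toJordanDecomposition.posPart.rnDeriv μ s).toReal
    - (β.toJordanDecomposition.negPart.rnDeriv μ s).toReal

theorem sdens_measurable (β : SignedMeasure S) (μ : Measure S) :
    Measurable (sdens β μ) :=
  (Measure.measurable_rnDeriv _ μ).ennreal_toReal.sub
    (Measure.measurable_rnDeriv _ μ).ennreal_toReal

theorem sdens_integrable (β : SignedMeasure S) (μ : Measure S) [IsFiniteMeasure μ] :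
    Integrable (sdens β μ) μ :=
  (Measure.integrable_toReal_rnDeriv).sub (Measure.integrable_toReal_rnDeriv)

theorem sintegral_eq_dens (β : SignedMeasure S) (μ : Measure S) [IsFiniteMeasure μ]
    (h1 : β.toJordanDecomposition.posPart ≪ μ) (h2 : β.toJordanDecomposition.negPart ≪ μ)
    (f : S → ℝ) (hfm : Measurable f) (hfb : ∀ s, ‖f s‖ ≤ 1) :
    sintegral β f = ∫ s, f s * sdens β μ s ∂μ := by
  have hp := MeasureTheory.integral_rnDeriv_smul (μ := β.toJordanDecomposition.posPart)
    (ν := μ) h1 (f := f)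
  have hq := MeasureTheory.integral_rnDeriv_smul (μ := β.toJordanDecomposition.negPart)
    (ν := μ) h2 (f := f)
  have hip : Integrable (fun s =>
      f s * (β.toJordanDecomposition.posPart.rnDeriv μ s).toReal) μ :=
    (Measure.integrable_toReal_rnDeriv).bdd_mul hfm.aestronglyMeasurable (Filter.Eventually.of_forall hfb)
  have hiq : Integrable (fun s =>
      f s * (β.toJordanDecomposition.negPart.rnDeriv μ s).toReal) μ :=
    (Measure.integrable_toReal_rnDeriv).bdd_mul hfm.aestronglyMeasurable (Filter.Eventually.of_forall hfb)
  have key : ∫ s, f s * sdens β μ s ∂μ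
      = (∫ s, f s * (β.toJordanDecomposition.posPart.rnDeriv μ s).toReal ∂μ)
        - ∫ s, f s * (β.toJordanDecomposition.negPart.rnDeriv μ s).toReal ∂μ := by
    rw [← integral_sub hip hiq]
    refine integral_congr_ae (Filter.Eventually.of_forall fun s => ?_)
    simp only [sdens]
    ring
  rw [key, sintegral]
  congr 1
  · rw [← hp]
    refine integral_congr_ae (Filter.Eventually.of_forall fun s => ?_)
    simp [smul_eq_mul, mul_comm]
  · rw [← hq]
    refine integral_congr_ae (Filter.Eventually.of_forall fun s => ?_)
    simp [smul_eq_mul, mul_comm]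

theorem signed_apply_eq_dens (β : SignedMeasure S) (μ : Measure S) [IsFiniteMeasure μ]
    (h1 : β.toJordanDecomposition.posPart ≪ μ) (h2 : β.toJordanDecomposition.negPart ≪ μ)
    {A : Set S} (hA : MeasurableSet A) :
    β A = ∫ s in A, sdens β μ s ∂μ := by
  have e1 : ∫ s in A, sdens β μ s ∂μ
      = (∫ s in A, (β.toJordanDecomposition.posPart.rnDeriv μ s).toReal ∂μ)
        - ∫ s in A, (β.toJordanDecomposition.negPart.rnDeriv μ s).toReal ∂μ := by
    rw [← integral_sub (Measure.integrable_toReal_rnDeriv).restrict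
      (Measure.integrable_toReal_rnDeriv).restrict]
    rfl
  rw [e1, Measure.setIntegral_toReal_rnDeriv h1 A, Measure.setIntegral_toReal_rnDeriv h2 A]
  conv_lhs => rw [← β.toSignedMeasure_toJordanDecomposition]
  rw [JordanDecomposition.toSignedMeasure, VectorMeasure.sub_apply,
    Measure.toSignedMeasure_apply_measurable hA, Measure.toSignedMeasure_apply_measurable hA]

theorem sintegral_indicator (β : SignedMeasure S) {A : Set S} (hA : MeasurableSet A) :
    sintegral β (A.indicator fun _ => (1:ℝ)) = β A := by
  rw [sintegral, integral_indicator_const (1:ℝ) hA, integral_indicator_const (1:ℝ) hA]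
  conv_rhs => rw [← β.toSignedMeasure_toJordanDecomposition]
  rw [JordanDecomposition.toSignedMeasure, VectorMeasure.sub_apply,
    Measure.toSignedMeasure_apply_measurable hA, Measure.toSignedMeasure_apply_measurable hA]
  simp

theorem sintegral_combo (β : SignedMeasure S) (a b : ℝ) (f₁ f₂ : S → ℝ)
    (h₁m : Measurable f₁) (h₁b : ∀ s, ‖f₁ s‖ ≤ 1)
    (h₂m : Measurable f₂) (h₂b : ∀ s, ‖f₂ s‖ ≤ 1) :
    sintegral β (a • f₁ + b • f₂) = a * sintegral β f₁ + b * sintegral β f₂ := by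
  have int : ∀ (ν : Measure S) [IsFiniteMeasure ν] (f : S → ℝ),
      Measurable f → (∀ s, ‖f s‖ ≤ 1) → Integrable f ν := by
    intro ν _ f hm hb
    exact (integrable_const (1:ℝ)).mono' hm.aestronglyMeasurable
      (Filter.Eventually.of_forall hb)
  have e : ∀ (ν : Measure S) [IsFiniteMeasure ν],
      ∫ s, (a • f₁ + b • f₂) s ∂ν = a * ∫ s, f₁ s ∂ν + b * ∫ s, f₂ s ∂ν := by
    intro ν _
    simp only [Pi.add_apply, Pi.smul_apply, smul_eq_mul]
    rw [integral_add ((int ν f₁ h₁m h₁b).const_mul a) ((int ν f₂ h₂m h₂b).const_mul b),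
      integral_const_mul, integral_const_mul]
  rw [sintegral, e _, e _, sintegral, sintegral]
  ring

end Bridge

theorem lorenzHull_eq_integrals
    {n : ℕ} {S : Type*} [MeasurableSpace S]
    (α : Fin n → SignedMeasure S) :
    lorenzHull α =
      {x | ∃ f : S → ℝ, Measurable f ∧ (∀ s, f s ∈ Set.Icc (0 : ℝ) 1) ∧
        x = fun i => sintegral (α i) f} := by
  classical
  set μ : Measure S := ∑ i, (α i).totalVariation with hμdef
  have hfin : IsFiniteMeasure μ := by
    constructor
    rw [hμdef, Measure.finset_sum_apply]
    refine ENNReal.sum_lt_top.mpr fun i _ => ?_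
    rw [SignedMeasure.totalVariation, Measure.add_apply]
    exact ENNReal.add_lt_top.mpr ⟨measure_lt_top _ _, measure_lt_top _ _⟩
  haveI := hfin
  have hac1 : ∀ i, (α i).toJordanDecomposition.posPart ≪ μ := by
    intro i
    refine Measure.absolutelyContinuous_of_le
      (le_trans (b := (α i).totalVariation) ?_ ?_)
    · rw [SignedMeasure.totalVariation]
      exact Measure.le_add_right le_rfl
    · refine Measure.le_iff.mpr fun A hA => ?_
      rw [hμdef, Measure.finset_sum_apply]
      exact Finset.single_le_sum (f := fun j => (α j).totalVariation A)
        (fun _ _ => zero_le) (Finset.mem_univ i)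
  have hac2 : ∀ i, (α i).toJordanDecomposition.negPart ≪ μ := by
    intro i
    refine Measure.absolutelyContinuous_of_le
      (le_trans (b := (α i).totalVariation) ?_ ?_)
    · rw [SignedMeasure.totalVariation]
      exact Measure.le_add_left le_rfl
    · refine Measure.le_iff.mpr fun A hA => ?_
      rw [hμdef, Measure.finset_sum_apply]
      exact Finset.single_le_sum (f := fun j => (α j).totalVariation A)
        (fun _ _ => zero_le) (Finset.mem_univ i)
  set g : Fin n → S → ℝ := fun i => sdens (α i) μ with hgdef
  apply Set.eq_of_subset_of_subset
  · -- lorenzHull ⊆ integrals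
    rw [lorenzHull]
    apply convexHull_min
    · rintro x ⟨A, hA, rfl⟩
      refine ⟨A.indicator fun _ => 1, measurable_const.indicator hA, fun s => ?_, ?_⟩
      · by_cases hs : s ∈ A
        · rw [Set.indicator_of_mem hs]
          exact ⟨zero_le_one, le_refl 1⟩
        · rw [Set.indicator_of_notMem hs]
          exact ⟨le_refl 0, zero_le_one⟩
      · funext i
        rw [sintegral_indicator (α i) hA]
    · -- convexity of the set of integrals
      rintro x ⟨f₁, h₁m, h₁i, rfl⟩ y ⟨f₂, h₂m, h₂i, rfl⟩ a b ha hb hab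
      have h₁b : ∀ s, ‖f₁ s‖ ≤ 1 := fun s => by
        rw [Real.norm_eq_abs, abs_le]; exact ⟨by linarith [(h₁i s).1], (h₁i s).2⟩
      have h₂b : ∀ s, ‖f₂ s‖ ≤ 1 := fun s => by
        rw [Real.norm_eq_abs, abs_le]; exact ⟨by linarith [(h₂i s).1], (h₂i s).2⟩
      refine ⟨a • f₁ + b • f₂, (h₁m.const_smul a).add (h₂m.const_smul b), fun s => ?_, ?_⟩
      · simp only [Pi.add_apply, Pi.smul_apply, smul_eq_mul]
        constructor
        · have := (h₁i s).1; have := (h₂i s).1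
          positivity
        · nlinarith [(h₁i s).2, (h₂i s).2, (h₁i s).1, (h₂i s).1]
      · funext i
        simp only [Pi.add_apply, Pi.smul_apply, smul_eq_mul]
        rw [sintegral_combo (α i) a b f₁ f₂ h₁m h₁b h₂m h₂b]
  · -- integrals ⊆ lorenzHull
    rintro x ⟨f, hfm, hf01, rfl⟩
    have hfb : ∀ s, ‖f s‖ ≤ 1 := fun s => by
      rw [Real.norm_eq_abs, abs_le]; exact ⟨by linarith [(hf01 s).1], (hf01 s).2⟩
    have hmain := dww_main μ n g (fun i => sdens_measurable _ _)
      (fun i => sdens_integrable _ _) f hfm hf01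
    have hx : (fun i => sintegral (α i) f) = fun i => ∫ s, f s * g i s ∂μ :=
      funext fun i => sintegral_eq_dens (α i) μ (hac1 i) (hac2 i) f hfm hfb
    rw [hx, lorenzHull]
    refine convexHull_mono ?_ hmain
    rintro p ⟨A, hA, rfl⟩
    exact ⟨A, hA, funext fun i => (signed_apply_eq_dens (α i) μ (hac1 i) (hac2 i) hA).symm⟩
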